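/- If |det A| = 1 then Σ = {e} is the trivial group. If |det A| > 1 then Σ is homeomorphic to the Cantor set; equivalently, Σ is a nonempty, compact, metrizable, perfect, totally disconnected topological space. -/

import Mathlib

open scoped Matrix

noncomputable section

/-- The integer lattice `ℤ^k` inside `ℝ^k`. -/
def lattice (k : ℕ) : AddSubgroup (Fin k → ℝ) :=
  AddSubgroup.pi Set.univ fun _ => AddSubgroup.zmultiples (1 : ℝ)

/-- The torus `𝕋^k = ℝ^k / ℤ^k`. -/
abbrev Torus (k : ℕ) := (Fin k → ℝ) ⧸ lattice k

/-- The canonical projection `ℝ^k → 𝕋^k`. -/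
def torusProj (k : ℕ) : (Fin k → ℝ) →+ Torus k := QuotientAddGroup.mk' (lattice k)

lemma mem_lattice_iff {k : ℕ} {x : Fin k → ℝ} :
    x ∈ lattice k ↔ ∀ i, ∃ n : ℤ, (n : ℝ) = x i := by
  simp [lattice, AddSubgroup.mem_pi, AddSubgroup.mem_zmultiples_iff, zsmul_eq_mul, mul_one]

variable {k : ℕ}

/-- The real matrix associated with an integer matrix. -/
def Areal (A : Matrix (Fin k) (Fin k) ℤ) : Matrix (Fin k) (Fin k) ℝ :=
  A.map (Int.cast : ℤ → ℝ)

lemma mulVec_lattice_mem (A : Matrix (Fin k) (Fin k) ℤ) {x : Fin k → ℝ}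
    (hx : x ∈ lattice k) : Areal A *ᵥ x ∈ lattice k := by
  rw [mem_lattice_iff] at hx ⊢
  choose n hn using hx
  intro i
  refine ⟨∑ j, A i j * n j, ?_⟩
  have : (Areal A *ᵥ x) i = ∑ j, (A i j : ℝ) * x j := by
    simp [Areal, Matrix.mulVec, dotProduct, Matrix.map_apply]
  rw [this]
  push_cast
  exact Finset.sum_congr rfl fun j _ => by rw [hn j]

/-- The endomorphism of `𝕋^k` induced by the integer matrix `A`. -/
def torusHom (A : Matrix (Fin k) (Fin k) ℤ) : Torus k →+ Torus k :=
  QuotientAddGroup.map (lattice k) (lattice k) (Areal A).mulVecLin.toAddMonoidHom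
    (fun _ hx => mulVec_lattice_mem A hx)

lemma torusHom_proj (A : Matrix (Fin k) (Fin k) ℤ) (x : Fin k → ℝ) :
    torusHom A (torusProj k x) = torusProj k (Areal A *ᵥ x) :=
  QuotientAddGroup.map_mk' _ _ _ _ x

/-- The toral solenoid `S_A`, as an additive subgroup of `(𝕋^k)^ℕ`. -/
def solenoid (A : Matrix (Fin k) (Fin k) ℤ) : AddSubgroup (ℕ → Torus k) where
  carrier := {ξ | ∀ j, ξ j = torusHom A (ξ (j + 1))}
  zero_mem' := by intro j; simp
  add_mem' := by
    intro a b ha hb j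
    simp only [Pi.add_apply, map_add]
    rw [← ha j, ← hb j]
  neg_mem' := by
    intro a ha j
    simp only [Pi.neg_apply, map_neg]
    rw [← ha j]

lemma mem_solenoid {A : Matrix (Fin k) (Fin k) ℤ} {ξ : ℕ → Torus k} :
    ξ ∈ solenoid A ↔ ∀ j, ξ j = torusHom A (ξ (j + 1)) := Iff.rfl

/-- The inverse of the matrix `A` over `ℝ`. -/
def Ainv (A : Matrix (Fin k) (Fin k) ℤ) : Matrix (Fin k) (Fin k) ℝ := (Areal A)⁻¹

lemma Areal_det_isUnit {A : Matrix (Fin k) (Fin k) ℤ} (hA : A.det ≠ 0) :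
    IsUnit (Areal A).det := by
  have h : ((A.det : ℤ) : ℝ) = (Areal A).det :=
    RingHom.map_det (Int.castRingHom ℝ) A
  rw [← h]
  exact isUnit_iff_ne_zero.mpr (by exact_mod_cast hA)

/-- The map `θ_v` on sequences: `(θ_v ξ)_j = ξ_j + [A^{-j} v]`. -/
def thetaFun (A : Matrix (Fin k) (Fin k) ℤ) (v : Fin k → ℝ) (ξ : ℕ → Torus k) :
    ℕ → Torus k :=
  fun j => ξ j + torusProj k ((Ainv A ^ j) *ᵥ v)

lemma thetaFun_mem (A : Matrix (Fin k) (Fin k) ℤ) (hA : A.det ≠ 0) (v : Fin k → ℝ)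
    {ξ : ℕ → Torus k} (hξ : ξ ∈ solenoid A) : thetaFun A v ξ ∈ solenoid A := by
  rw [mem_solenoid] at hξ ⊢
  intro j
  have key : Areal A *ᵥ ((Ainv A ^ (j + 1)) *ᵥ v) = (Ainv A ^ j) *ᵥ v := by
    rw [Matrix.mulVec_mulVec]
    rw [pow_succ', ← Matrix.mul_assoc, Ainv, Matrix.mul_nonsing_inv _ (Areal_det_isUnit hA),
      Matrix.one_mul]
  show ξ j + torusProj k ((Ainv A ^ j) *ᵥ v)
      = torusHom A (ξ (j + 1) + torusProj k ((Ainv A ^ (j + 1)) *ᵥ v))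
  rw [map_add, torusHom_proj, key, ← hξ j]

/-- The homeomorphism `θ_v : S_A → S_A` (Definition 4.1 of the paper). -/
def theta (A : Matrix (Fin k) (Fin k) ℤ) (hA : A.det ≠ 0) (v : Fin k → ℝ)
    (ξ : ↥(solenoid A)) : ↥(solenoid A) :=
  ⟨thetaFun A v ξ, thetaFun_mem A hA v ξ.2⟩

/-- The right shift `σ_A` on sequences. -/
def shiftFun (A : Matrix (Fin k) (Fin k) ℤ) (ξ : ℕ → Torus k) : ℕ → Torus k :=
  fun j => match j with
  | 0 => torusHom A (ξ 0)
  | j + 1 => ξ j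

lemma shiftFun_mem (A : Matrix (Fin k) (Fin k) ℤ) {ξ : ℕ → Torus k}
    (hξ : ξ ∈ solenoid A) : shiftFun A ξ ∈ solenoid A := by
  rw [mem_solenoid] at hξ ⊢
  intro j
  match j with
  | 0 => rfl
  | j + 1 => exact hξ j

/-- The shift automorphism `σ_A : S_A → S_A`. -/
def sigma (A : Matrix (Fin k) (Fin k) ℤ) (ξ : ↥(solenoid A)) : ↥(solenoid A) :=
  ⟨shiftFun A ξ, shiftFun_mem A ξ.2⟩

/-- The inverse shift `σ_A⁻¹` on sequences. -/
def shiftInvFun (ξ : ℕ → Torus k) : ℕ → Torus k := fun j => ξ (j + 1)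

lemma shiftInvFun_mem (A : Matrix (Fin k) (Fin k) ℤ) {ξ : ℕ → Torus k}
    (hξ : ξ ∈ solenoid A) : shiftInvFun ξ ∈ solenoid A :=
  mem_solenoid.mpr fun j => mem_solenoid.mp hξ (j + 1)

/-- The inverse shift `σ_A⁻¹ : S_A → S_A`. -/
def sigmaInv (A : Matrix (Fin k) (Fin k) ℤ) (ξ : ↥(solenoid A)) : ↥(solenoid A) :=
  ⟨shiftInvFun ξ, shiftInvFun_mem A ξ.2⟩

/-- Projection `p₀ : S_A → 𝕋^k` onto the zeroth coordinate. -/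
def pZero (A : Matrix (Fin k) (Fin k) ℤ) : ↥(solenoid A) →+ Torus k :=
  (Pi.evalAddMonoidHom (fun _ : ℕ => Torus k) 0).comp (solenoid A).subtype

variable {k : ℕ}

/-- `Σ = p₀⁻¹([0])`, the fiber of the zeroth-coordinate projection over `0`,
as a subgroup of `S_A`. -/
def SigmaGrp (A : Matrix (Fin k) (Fin k) ℤ) : AddSubgroup ↥(solenoid A) :=
  (pZero A).ker

lemma pZero_theta' (A : Matrix (Fin k) (Fin k) ℤ) (hA : A.det ≠ 0) (v : Fin k → ℝ)
    (ξ : ↥(solenoid A)) :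
    pZero A (theta A hA v ξ) = pZero A ξ + torusProj k v := by
  show (ξ : ℕ → Torus k) 0 + torusProj k ((Ainv A ^ 0) *ᵥ v)
      = (ξ : ℕ → Torus k) 0 + torusProj k v
  rw [pow_zero, Matrix.one_mulVec]

/-- The inclusion of an integer vector into `ℝ^k`. -/
def intVec (n : Fin k → ℤ) : Fin k → ℝ := fun i => (n i : ℝ)

lemma intVec_mem_lattice (n : Fin k → ℤ) : intVec n ∈ lattice k :=
  mem_lattice_iff.mpr fun i => ⟨n i, rfl⟩

lemma theta_neg_intVec_mem (A : Matrix (Fin k) (Fin k) ℤ) (hA : A.det ≠ 0)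
    (n : Fin k → ℤ) : theta A hA (-intVec n) 0 ∈ SigmaGrp A := by
  rw [SigmaGrp, AddMonoidHom.mem_ker, pZero_theta', map_zero, zero_add, map_neg, neg_eq_zero]
  exact (QuotientAddGroup.eq_zero_iff _).mpr (intVec_mem_lattice n)

/-- The embedding `α : ℤ^k → S̄ = Σ × ℝ^k`, `α n = (ϑ_{-n}(e), n)`. -/
def alphaMap (A : Matrix (Fin k) (Fin k) ℤ) (hA : A.det ≠ 0) (n : Fin k → ℤ) :
    ↥(SigmaGrp A) × (Fin k → ℝ) :=
  (⟨theta A hA (-intVec n) 0, theta_neg_intVec_mem A hA n⟩, intVec n)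

/-- The map `q̄ : S̄ → S_A`, `q̄(ξ, v) = θ_v ξ`. -/
def qbar (A : Matrix (Fin k) (Fin k) ℤ) (hA : A.det ≠ 0)
    (p : ↥(SigmaGrp A) × (Fin k → ℝ)) : ↥(solenoid A) :=
  theta A hA p.2 ↑p.1

lemma sigma_mem_SigmaGrp (A : Matrix (Fin k) (Fin k) ℤ) {x : ↥(solenoid A)}
    (hx : x ∈ SigmaGrp A) : sigma A x ∈ SigmaGrp A := by
  rw [SigmaGrp, AddMonoidHom.mem_ker] at hx ⊢
  show torusHom A ((x : ℕ → Torus k) 0) = 0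
  rw [show (x : ℕ → Torus k) 0 = 0 from hx, map_zero]

/-- The map `σ̄ : S̄ → S̄`, `σ̄(ξ, v) = (σ_A ξ, A v)`. -/
def sigmabar (A : Matrix (Fin k) (Fin k) ℤ)
    (p : ↥(SigmaGrp A) × (Fin k → ℝ)) : ↥(SigmaGrp A) × (Fin k → ℝ) :=
  (⟨sigma A ↑p.1, sigma_mem_SigmaGrp A p.1.2⟩, Areal A *ᵥ p.2)

/-! ### Auxiliary material -/

section AuxTop

lemma lattice_coe (k : ℕ) :
    (lattice k : Set (Fin k → ℝ)) =
      Set.pi Set.univ fun _ : Fin k => Set.range ((↑) : ℤ → ℝ) := by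
  ext x
  simp only [SetLike.mem_coe, mem_lattice_iff, Set.mem_pi, Set.mem_univ, forall_true_left,
    Set.mem_range]

instance lattice_isClosed (k : ℕ) : IsClosed ((lattice k : Set (Fin k → ℝ))) := by
  rw [lattice_coe]
  exact isClosed_set_pi fun i _ => Int.isClosedEmbedding_coe_real.isClosed_range

lemma torusProj_eq (k : ℕ) (v : Fin k → ℝ) :
    torusProj k v = QuotientAddGroup.mk v := rfl

lemma continuous_torusProj (k : ℕ) : Continuous (torusProj k) :=
  QuotientAddGroup.continuous_mk

lemma continuous_torusHom {k : ℕ} (A : Matrix (Fin k) (Fin k) ℤ) :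
    Continuous (torusHom A) := by
  have hq : Topology.IsQuotientMap (QuotientAddGroup.mk : (Fin k → ℝ) → Torus k) :=
    QuotientAddGroup.isOpenMap_coe.isQuotientMap QuotientAddGroup.continuous_mk
      QuotientAddGroup.mk_surjective
  rw [hq.continuous_iff]
  have : (torusHom A) ∘ (QuotientAddGroup.mk : (Fin k → ℝ) → Torus k)
      = fun v => torusProj k (Areal A *ᵥ v) := by
    funext v
    exact torusHom_proj A v
  rw [this]
  exact (continuous_torusProj k).comp ((Areal A).mulVecLin.continuous_of_finiteDimensional)

instance torus_compact (k : ℕ) : CompactSpace (Torus k) := by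
  refine ⟨?_⟩
  have hsub : (Set.univ : Set (Torus k)) ⊆
      (torusProj k) '' (Set.pi Set.univ fun _ : Fin k => Set.Icc (0:ℝ) 1) := by
    rintro x -
    obtain ⟨v, rfl⟩ := QuotientAddGroup.mk'_surjective (lattice k) x
    refine ⟨fun i => Int.fract (v i), fun i _ => ⟨Int.fract_nonneg _, (Int.fract_lt_one _).le⟩, ?_⟩
    show QuotientAddGroup.mk _ = QuotientAddGroup.mk v
    rw [QuotientAddGroup.eq_iff_sub_mem]
    refine mem_lattice_iff.mpr fun i => ⟨-⌊v i⌋, ?_⟩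
    simp only [Pi.sub_apply, Int.fract]
    push_cast
    ring
  have him : IsCompact ((torusProj k) '' (Set.pi Set.univ fun _ : Fin k => Set.Icc (0:ℝ) 1)) :=
    (isCompact_univ_pi fun _ => isCompact_Icc).image (continuous_torusProj k)
  rw [← Set.univ_subset_iff.mp hsub]
  exact him

end AuxTop

section AuxAlg

variable {k : ℕ}

lemma Areal_mul (A B : Matrix (Fin k) (Fin k) ℤ) : Areal (A * B) = Areal A * Areal B :=
  Matrix.map_mul (f := Int.castRingHom ℝ)

lemma Areal_one : Areal (1 : Matrix (Fin k) (Fin k) ℤ) = 1 :=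
  Matrix.map_one _ (Int.cast_zero) (Int.cast_one)

lemma Areal_mulVec_intVec (C : Matrix (Fin k) (Fin k) ℤ) (m : Fin k → ℤ) :
    Areal C *ᵥ intVec m = intVec (C *ᵥ m) := by
  funext i
  simp only [Areal, intVec, Matrix.mulVec, dotProduct, Matrix.map_apply]
  push_cast
  rfl

lemma torusHom_one (x : Torus k) : torusHom (1 : Matrix (Fin k) (Fin k) ℤ) x = x := by
  obtain ⟨v, rfl⟩ := QuotientAddGroup.mk'_surjective (lattice k) x
  show torusHom 1 (torusProj k v) = torusProj k v
  rw [torusHom_proj, Areal_one, Matrix.one_mulVec]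

lemma torusHom_mul (A B : Matrix (Fin k) (Fin k) ℤ) (x : Torus k) :
    torusHom (A * B) x = torusHom A (torusHom B x) := by
  obtain ⟨v, rfl⟩ := QuotientAddGroup.mk'_surjective (lattice k) x
  show torusHom (A * B) (torusProj k v) = torusHom A (torusHom B (torusProj k v))
  rw [torusHom_proj, torusHom_proj, torusHom_proj, Areal_mul, Matrix.mulVec_mulVec]

lemma torusHom_surjective {A : Matrix (Fin k) (Fin k) ℤ} (hA : A.det ≠ 0) :
    Function.Surjective (torusHom A) := by
  intro y
  obtain ⟨v, rfl⟩ := QuotientAddGroup.mk'_surjective (lattice k) y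
  refine ⟨torusProj k (Ainv A *ᵥ v), ?_⟩
  show torusHom A (torusProj k (Ainv A *ᵥ v)) = torusProj k v
  rw [torusHom_proj, Matrix.mulVec_mulVec, Ainv,
    Matrix.mul_nonsing_inv _ (Areal_det_isUnit hA), Matrix.one_mulVec]

/-- If `torusHom B x = 0` then `det B • (representative of x)` is an integer vector. -/
lemma det_smul_rep_int {B : Matrix (Fin k) (Fin k) ℤ} {v : Fin k → ℝ}
    (hv : Areal B *ᵥ v ∈ lattice k) :
    ∃ n : Fin k → ℤ, (B.det : ℝ) • v = intVec n := by
  obtain ⟨m, hm⟩ : ∃ m : Fin k → ℤ, intVec m = Areal B *ᵥ v := by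
    rw [mem_lattice_iff] at hv
    choose m hm using hv
    exact ⟨m, funext fun i => hm i⟩
  refine ⟨B.adjugate *ᵥ m, ?_⟩
  have h1 : Areal B.adjugate * Areal B = (B.det : ℝ) • 1 := by
    rw [← Areal_mul, Matrix.adjugate_mul]
    ext i j
    show (((B.det • (1 : Matrix (Fin k) (Fin k) ℤ)) i j : ℤ) : ℝ)
        = ((B.det : ℝ) • (1 : Matrix (Fin k) (Fin k) ℝ)) i j
    rw [Matrix.smul_apply, Matrix.smul_apply, Matrix.one_apply, Matrix.one_apply]
    split <;> simp
  calc (B.det : ℝ) • v = ((B.det : ℝ) • 1) *ᵥ v := by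
        rw [Matrix.smul_mulVec, Matrix.one_mulVec]
    _ = Areal B.adjugate *ᵥ (Areal B *ᵥ v) := by rw [← h1, Matrix.mulVec_mulVec]
    _ = Areal B.adjugate *ᵥ intVec m := by rw [hm]
    _ = intVec (B.adjugate *ᵥ m) := Areal_mulVec_intVec _ _

/-- The kernel of `torusHom B` is finite when `det B ≠ 0`. -/
lemma ker_torusHom_finite {B : Matrix (Fin k) (Fin k) ℤ} (hB : B.det ≠ 0) :
    {x : Torus k | torusHom B x = 0}.Finite := by
  haveI : NeZero B.det.natAbs := ⟨Int.natAbs_ne_zero.mpr hB⟩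
  have key : ∀ x : {x : Torus k | torusHom B x = 0},
      ∃ n : Fin k → ℤ, (B.det : ℝ) • (Quotient.out (x : Torus k)) = intVec n := by
    intro x
    apply det_smul_rep_int
    have hx : torusHom B (x : Torus k) = 0 := x.2
    rw [← QuotientAddGroup.eq_zero_iff, ← torusProj_eq, ← torusHom_proj, torusProj_eq,
      QuotientAddGroup.out_eq']
    exact hx
  choose n hn using key
  rw [← Set.finite_coe_iff]
  refine Finite.of_injective
    (fun x => fun i => ((n x i : ZMod B.det.natAbs)) : _ → Fin k → ZMod B.det.natAbs) ?_
  intro x y hxy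
  have hdvd : ∀ i, B.det ∣ n x i - n y i := by
    intro i
    have := congrFun hxy i
    have h2 : (B.det.natAbs : ℤ) ∣ n y i - n x i :=
      (ZMod.intCast_eq_intCast_iff _ _ _).mp this |>.dvd
    rw [Int.natAbs_dvd] at h2
    exact (dvd_sub_comm.mp h2)
  have hdR : (B.det : ℝ) ≠ 0 := by exact_mod_cast hB
  have hsub : Quotient.out (x : Torus k) - Quotient.out (y : Torus k) ∈ lattice k := by
    rw [mem_lattice_iff]
    intro i
    obtain ⟨c, hc⟩ := hdvd i
    refine ⟨c, ?_⟩
    have hnx := congrFun (hn x) i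
    have hny := congrFun (hn y) i
    simp only [Pi.smul_apply, smul_eq_mul, intVec] at hnx hny
    apply mul_left_cancel₀ hdR
    have : (B.det : ℝ) * (Quotient.out (x : Torus k) i - Quotient.out (y : Torus k) i)
        = ((n x i : ℝ)) - ((n y i : ℝ)) := by rw [mul_sub, hnx, hny]
    rw [Pi.sub_apply, this]
    rw [show ((n x i : ℝ)) - ((n y i : ℝ)) = ((n x i - n y i : ℤ) : ℝ) by push_cast; ring, hc]
    push_cast
    ring
  apply Subtype.ext
  calc (x : Torus k) = QuotientAddGroup.mk (Quotient.out (x : Torus k)) :=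
        (QuotientAddGroup.out_eq' _).symm
    _ = QuotientAddGroup.mk (Quotient.out (y : Torus k)) :=
        (QuotientAddGroup.eq_iff_sub_mem).mpr hsub
    _ = (y : Torus k) := QuotientAddGroup.out_eq' _

/-- When `|det A| = 1`, the kernel of `torusHom A` is trivial. -/
lemma ker_torusHom_trivial {A : Matrix (Fin k) (Fin k) ℤ} (h1 : |A.det| = 1)
    {x : Torus k} (hx : torusHom A x = 0) : x = 0 := by
  obtain ⟨v, rfl⟩ := QuotientAddGroup.mk'_surjective (lattice k) x
  have hv : Areal A *ᵥ v ∈ lattice k := by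
    rw [← QuotientAddGroup.eq_zero_iff, ← torusProj_eq, ← torusHom_proj]
    exact hx
  obtain ⟨m, hm⟩ := det_smul_rep_int hv
  have hvmem : v ∈ lattice k := by
    have hcases : A.det = 1 ∨ A.det = -1 := Int.isUnit_iff.mp (Int.isUnit_iff_abs_eq.mpr h1)
    rcases hcases with h | h
    · rw [h] at hm
      simp only [Int.cast_one, one_smul] at hm
      rw [hm]
      exact intVec_mem_lattice m
    · rw [h] at hm
      have : v = intVec (-m) := by
        funext i
        have := congrFun hm i
        simp only [Pi.smul_apply, smul_eq_mul, Int.cast_neg, Int.cast_one, intVec,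
          Pi.neg_apply] at this ⊢
        push_cast
        linarith
      rw [this]
      exact intVec_mem_lattice (-m)
  show QuotientAddGroup.mk v = 0
  exact (QuotientAddGroup.eq_zero_iff v).mpr hvmem

/-- When `1 < |det A|`, the kernel of `torusHom A` is nontrivial. -/
lemma exists_ker_ne_zero {A : Matrix (Fin k) (Fin k) ℤ} (hA : A.det ≠ 0)
    (h1 : 1 < |A.det|) : ∃ c : Torus k, c ≠ 0 ∧ torusHom A c = 0 := by
  by_contra hcon
  push_neg at hcon
  have hker : ∀ c : Torus k, torusHom A c = 0 → c = 0 := by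
    intro c hc
    by_contra hne
    exact hcon c hne hc
  -- all columns of A⁻¹ are integral
  have hcol : ∀ w : Fin k → ℤ, Ainv A *ᵥ intVec w ∈ lattice k := by
    intro w
    have hval : torusHom A (torusProj k (Ainv A *ᵥ intVec w)) = 0 := by
      rw [torusHom_proj, Matrix.mulVec_mulVec, Ainv,
        Matrix.mul_nonsing_inv _ (Areal_det_isUnit hA), Matrix.one_mulVec]
      exact (QuotientAddGroup.eq_zero_iff _).mpr (intVec_mem_lattice w)
    have := hker _ hval
    exact (QuotientAddGroup.eq_zero_iff _).mp this
  -- hence A⁻¹ is an integer matrix B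
  have hentry : ∀ i j, ∃ n : ℤ, (n : ℝ) = Ainv A i j := by
    intro i j
    have := mem_lattice_iff.mp (hcol (Pi.single j 1)) i
    obtain ⟨c, hc⟩ := this
    refine ⟨c, ?_⟩
    rw [hc]
    have : intVec (Pi.single j (1:ℤ)) = Pi.single j (1:ℝ) := by
      funext i'
      simp only [intVec, Pi.single_apply]
      split <;> simp
    rw [this, Matrix.mulVec_single]
    simp
  choose Bf hBf using fun i => hentry i
  set B : Matrix (Fin k) (Fin k) ℤ := Matrix.of Bf with hB
  have hAB : Areal B = Ainv A := by
    ext i j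
    exact hBf i j
  have hABone : A * B = 1 := by
    have h : Areal (A * B) = Areal 1 := by
      rw [Areal_mul, hAB, Ainv, Matrix.mul_nonsing_inv _ (Areal_det_isUnit hA), Areal_one]
    ext i j
    have h2 : (((A * B) i j : ℤ) : ℝ) = (((1 : Matrix (Fin k) (Fin k) ℤ) i j : ℤ) : ℝ) := by
      have h3 := congrArg (fun M : Matrix (Fin k) (Fin k) ℝ => M i j) h
      simpa [Areal, Matrix.map_apply] using h3
    exact_mod_cast h2
  have : IsUnit A.det := IsUnit.of_mul_eq_one B.det (by rw [← Matrix.det_mul, hABone, Matrix.det_one])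
  rw [Int.isUnit_iff_abs_eq] at this
  omega

end AuxAlg
section AuxMain

open Topology

variable {k : ℕ} {A : Matrix (Fin k) (Fin k) ℤ}

lemma solenoid_zero_eq {ξ : ℕ → Torus k} (hξ : ξ ∈ solenoid A) (j : ℕ) :
    ξ 0 = torusHom (A ^ j) (ξ j) := by
  induction j with
  | zero => rw [pow_zero, torusHom_one]
  | succ j ih => rw [ih, mem_solenoid.mp hξ j, ← torusHom_mul, ← pow_succ]

lemma isClosed_solenoid (A : Matrix (Fin k) (Fin k) ℤ) :
    IsClosed ((solenoid A : Set (ℕ → Torus k))) := by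
  have h : (solenoid A : Set (ℕ → Torus k)) =
      ⋂ j : ℕ, {ξ : ℕ → Torus k | ξ j = torusHom A (ξ (j + 1))} := by
    ext ξ
    simp only [SetLike.mem_coe, mem_solenoid, Set.mem_iInter, Set.mem_setOf_eq]
  rw [h]
  exact isClosed_iInter fun j =>
    isClosed_eq (continuous_apply j) ((continuous_torusHom A).comp (continuous_apply (j + 1)))

instance solenoid_compact (A : Matrix (Fin k) (Fin k) ℤ) : CompactSpace ↥(solenoid A) :=
  isCompact_iff_compactSpace.mp (isClosed_solenoid A).isCompact

lemma continuous_pZero (A : Matrix (Fin k) (Fin k) ℤ) : Continuous (pZero A) := by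
  have h : (pZero A : ↥(solenoid A) → Torus k)
      = fun x : ↥(solenoid A) => (x : ℕ → Torus k) 0 := rfl
  rw [h]
  exact (continuous_apply 0).comp continuous_subtype_val

lemma isClosed_SigmaGrp (A : Matrix (Fin k) (Fin k) ℤ) :
    IsClosed ((SigmaGrp A : Set ↥(solenoid A))) := by
  have h : (SigmaGrp A : Set ↥(solenoid A)) = (pZero A) ⁻¹' {0} := by
    ext x
    simp only [SetLike.mem_coe, SigmaGrp, AddMonoidHom.mem_ker, Set.mem_preimage,
      Set.mem_singleton_iff]
  rw [h]
  exact IsClosed.preimage (continuous_pZero A) isClosed_singleton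

instance SigmaGrp_compact (A : Matrix (Fin k) (Fin k) ℤ) : CompactSpace ↥(SigmaGrp A) :=
  isCompact_iff_compactSpace.mp (isClosed_SigmaGrp A).isCompact

/-- The embedding of `Σ` into the ambient product. -/
def eMap (A : Matrix (Fin k) (Fin k) ℤ) (x : ↥(SigmaGrp A)) : ℕ → Torus k :=
  ((x : ↥(solenoid A)) : ℕ → Torus k)

lemma continuous_eMap (A : Matrix (Fin k) (Fin k) ℤ) : Continuous (eMap A) :=
  continuous_subtype_val.comp continuous_subtype_val

lemma injective_eMap (A : Matrix (Fin k) (Fin k) ℤ) : Function.Injective (eMap A) :=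
  fun _ _ h => Subtype.ext (Subtype.ext h)

lemma inducing_eMap (A : Matrix (Fin k) (Fin k) ℤ) : IsInducing (eMap A) :=
  IsInducing.subtypeVal.comp IsInducing.subtypeVal

lemma eMap_add (A : Matrix (Fin k) (Fin k) ℤ) (x y : ↥(SigmaGrp A)) :
    eMap A (x + y) = eMap A x + eMap A y := rfl

lemma eMap_zero_eq (A : Matrix (Fin k) (Fin k) ℤ) (x : ↥(SigmaGrp A)) :
    eMap A x 0 = 0 :=
  AddMonoidHom.mem_ker.mp x.2

lemma eMap_ker_pow (A : Matrix (Fin k) (Fin k) ℤ) (x : ↥(SigmaGrp A)) (j : ℕ) :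
    torusHom (A ^ j) (eMap A x j) = 0 :=
  (solenoid_zero_eq (x : ↥(solenoid A)).2 j).symm.trans (eMap_zero_eq A x)

lemma totallyDisconnected_SigmaGrp (hA : A.det ≠ 0) :
    TotallyDisconnectedSpace ↥(SigmaGrp A) := by
  set S : ℕ → Set (Torus k) := fun j => {x : Torus k | torusHom (A ^ j) x = 0} with hS
  have hfin : ∀ j, (S j).Finite := fun j =>
    ker_torusHom_finite (by rw [Matrix.det_pow]; exact pow_ne_zero j hA)
  haveI : ∀ j, Finite ↥(S j) := fun j => (hfin j).to_subtype
  let Φ : ↥(SigmaGrp A) → ∀ j : ℕ, ↥(S j) := fun x j => ⟨eMap A x j, eMap_ker_pow A x j⟩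
  have hcont : Continuous Φ := continuous_pi fun j =>
    Continuous.subtype_mk ((continuous_apply j).comp (continuous_eMap A)) _
  have hinj : Function.Injective Φ := by
    intro x y h
    apply injective_eMap A
    funext j
    exact congrArg Subtype.val (congrFun h j)
  constructor
  intro t _ ht
  have hst : (Φ '' t).Subsingleton := (ht.image Φ hcont.continuousOn).subsingleton
  intro a ha b hb
  exact hinj (hst (Set.mem_image_of_mem Φ ha) (Set.mem_image_of_mem Φ hb))

lemma exists_chain (hA : A.det ≠ 0) (c : Torus k) :
    ∃ g : ℕ → Torus k, g 0 = c ∧ ∀ m, torusHom A (g (m + 1)) = g m := by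
  choose f hf using torusHom_surjective hA
  refine ⟨fun m => f^[m] c, rfl, fun m => ?_⟩
  show torusHom A (f^[m + 1] c) = f^[m] c
  rw [Function.iterate_succ_apply', hf]

lemma exists_zeta (hA : A.det ≠ 0) (hdet : 1 < |A.det|) (J : ℕ) :
    ∃ ζ : ↥(SigmaGrp A), (∀ j, j ≤ J → eMap A ζ j = 0) ∧ eMap A ζ (J + 1) ≠ 0 := by
  obtain ⟨c, hc0, hck⟩ := exists_ker_ne_zero hA hdet
  obtain ⟨g, hg0, hg⟩ := exists_chain hA c
  set ζf : ℕ → Torus k := fun j => if j ≤ J then 0 else g (j - (J + 1)) with hζf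
  have hmem : ζf ∈ solenoid A := by
    rw [mem_solenoid]
    intro j
    by_cases h1 : j + 1 ≤ J
    · have h2 : j ≤ J := by omega
      simp [ζf, h1, h2]
    · by_cases h2 : j ≤ J
      · have h3 : j + 1 - (J + 1) = 0 := by omega
        simp [ζf, h1, h2, h3, hg0, hck]
      · have h3 : j + 1 - (J + 1) = (j - (J + 1)) + 1 := by omega
        have h4 : ¬ (j + 1 ≤ J) := h1
        simp only [ζf, if_neg h4, if_neg h2, h3]
        exact (hg _).symm
  have hsig : (⟨ζf, hmem⟩ : ↥(solenoid A)) ∈ SigmaGrp A := by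
    rw [SigmaGrp, AddMonoidHom.mem_ker]
    show ζf 0 = 0
    simp [ζf]
  refine ⟨⟨⟨ζf, hmem⟩, hsig⟩, fun j hj => ?_, ?_⟩
  · show ζf j = 0
    simp [ζf, hj]
  · show ζf (J + 1) ≠ 0
    have h5 : ¬ (J + 1 ≤ J) := by omega
    have h6 : J + 1 - (J + 1) = 0 := Nat.sub_self _
    simp only [ζf, if_neg h5, h6, hg0]
    exact hc0

lemma perfect_SigmaGrp (hA : A.det ≠ 0) (hdet : 1 < |A.det|) :
    Perfect (Set.univ : Set ↥(SigmaGrp A)) := by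
  refine ⟨isClosed_univ, fun x _ => ?_⟩
  rw [accPt_iff_nhds]
  intro U hU
  rw [(inducing_eMap A).nhds_eq_comap, Filter.mem_comap] at hU
  obtain ⟨V, hV, hVU⟩ := hU
  rw [nhds_pi, Filter.mem_pi] at hV
  obtain ⟨I, hIfin, t, ht, htV⟩ := hV
  obtain ⟨J, hJ⟩ := hIfin.bddAbove
  obtain ⟨ζ, hζ0, hζne⟩ := exists_zeta hA hdet J
  refine ⟨x + ζ, ⟨hVU ?_, trivial⟩, fun hxx => ?_⟩
  · show eMap A (x + ζ) ∈ V
    apply htV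
    rw [Set.mem_pi]
    intro j hj
    have hjJ : j ≤ J := hJ hj
    rw [eMap_add, Pi.add_apply, hζ0 j hjJ, add_zero]
    exact mem_of_mem_nhds (ht j)
  · apply hζne
    have h := congrFun (congrArg (eMap A) hxx) (J + 1)
    rw [eMap_add, Pi.add_apply] at h
    exact (left_eq_add.mp h.symm)

set_option synthInstance.maxHeartbeats 400000 in
instance torus_metrizable (k : ℕ) : TopologicalSpace.MetrizableSpace (Torus k) :=
  inferInstance

instance SigmaGrp_metrizable (A : Matrix (Fin k) (Fin k) ℤ) :
    TopologicalSpace.MetrizableSpace ↥(SigmaGrp A) := by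
  haveI h1 : TopologicalSpace.MetrizableSpace (ℕ → Torus k) := inferInstance
  exact Topology.IsEmbedding.metrizableSpace ⟨inducing_eMap A, injective_eMap A⟩

end AuxMain
/-- If `|det A| = 1` then `Σ` is the trivial group.  If `|det A| > 1` then `Σ`
is homeomorphic to the Cantor set; equivalently, `Σ` is a nonempty, compact, metrizable, perfect,
totally disconnected topological space. -/
theorem SigmaGrp_trivial_or_Cantor (k : ℕ) (hk : 1 ≤ k) (A : Matrix (Fin k) (Fin k) ℤ) (hA : A.det ≠ 0) :
    (|A.det| = 1 → SigmaGrp A = ⊥) ∧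
    (1 < |A.det| →
      Nonempty ↥(SigmaGrp A) ∧
      CompactSpace ↥(SigmaGrp A) ∧
      TopologicalSpace.MetrizableSpace ↥(SigmaGrp A) ∧
      Perfect (Set.univ : Set ↥(SigmaGrp A)) ∧
      TotallyDisconnectedSpace ↥(SigmaGrp A)) := by
  constructor
  · intro h1
    rw [eq_bot_iff]
    intro x hx
    rw [AddSubgroup.mem_bot]
    have hall : ∀ j, (x : ℕ → Torus k) j = 0 := by
      intro j
      induction j with
      | zero => exact AddMonoidHom.mem_ker.mp hx
      | succ j ih =>
          apply ker_torusHom_trivial h1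
          rw [← mem_solenoid.mp x.2 j]
          exact ih
    exact Subtype.ext (funext hall)
  · intro hdet
    exact ⟨⟨0⟩, inferInstance, inferInstance, perfect_SigmaGrp hA hdet,
      totallyDisconnected_SigmaGrp hA⟩

end
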